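/- Assume R is a ℚ-algebra. Let I be an ideal of R{x̄}_{D*} with characteristic set 𝒞. If f ∈ I is reduced with respect to 𝒞, then f ∈ (I ∩ R). -/

import Mathlib

open MvPolynomial
open scoped BigOperators

/-- The variables `dᶿxⱼ` of the `D*`-polynomial ring in `n` indeterminates with `M`
operators: a pair (index of `x`, multi-exponent `θ ∈ ℕ^M`). -/
abbrev DVar (n M : ℕ) : Type := Fin n × (Fin M → ℕ)

/-- Applying the composite operator with multi-exponent `φ` to a variable. -/
def shiftVar {n M : ℕ} (u : DVar n M) (φ : Fin M → ℕ) : DVar n M :=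
  (u.1, fun l => u.2 l + φ l)

/-- `φ` encodes a composition of the associated endomorphisms only (a `σ`-transform). -/
def IsSigmaExp {M : ℕ} (σset : Finset (Fin M)) (φ : Fin M → ℕ) : Prop :=
  ∀ k, φ k ≠ 0 → k ∈ σset

/-- `φ` encodes a composition of operators involving at least one derivation-type
operator (a `δ`-transform). -/
def IsDeltaExp {M : ℕ} (σset : Finset (Fin M)) (φ : Fin M → ℕ) : Prop :=
  ∃ k, k ∉ σset ∧ φ k ≠ 0

/-- `u` is the leader of `f`: the highest-ranked variable occurring in `f`. -/
def IsLeader {R : Type} [CommRing R] {n M : ℕ} (lt : DVar n M → DVar n M → Prop)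
    (f : MvPolynomial (DVar n M) R) (u : DVar n M) : Prop :=
  u ∈ f.vars ∧ ∀ v ∈ f.vars, v ≠ u → lt v u

/-- `f` lies in (the image of) `R`, i.e. is a constant polynomial. -/
def IsConst {R : Type} [CommRing R] {n M : ℕ} (f : MvPolynomial (DVar n M) R) : Prop :=
  ∃ r : R, f = C r

/-- `g` is reduced with respect to `f`: `g` contains no `δ`-transform of the leader of
`f`, and every `σ`-transform of the leader of `f` occurs in `g` with degree `< deg f`. -/
def ReducedWrt {R : Type} [CommRing R] {n M : ℕ} (lt : DVar n M → DVar n M → Prop)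
    (σset : Finset (Fin M)) (g f : MvPolynomial (DVar n M) R) : Prop :=
  ∀ u : DVar n M, IsLeader lt f u →
    (∀ φ : Fin M → ℕ, IsDeltaExp σset φ → shiftVar u φ ∉ g.vars) ∧
    (∀ φ : Fin M → ℕ, IsSigmaExp σset φ →
      degreeOf (shiftVar u φ) g < degreeOf u f)

/-- `g` is reduced with respect to every element of `A`. -/
def ReducedWrtSet {R : Type} [CommRing R] {n M : ℕ} (lt : DVar n M → DVar n M → Prop)
    (σset : Finset (Fin M)) (g : MvPolynomial (DVar n M) R)
    (A : Set (MvPolynomial (DVar n M) R)) : Prop :=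
  ∀ f ∈ A, ReducedWrt lt σset g f

/-- `A` is autoreduced: no element is constant and any two distinct elements are reduced
with respect to each other. -/
def Autoreduced {R : Type} [CommRing R] {n M : ℕ} (lt : DVar n M → DVar n M → Prop)
    (σset : Finset (Fin M)) (A : Set (MvPolynomial (DVar n M) R)) : Prop :=
  (∀ f ∈ A, ¬ IsConst f) ∧
  ∀ f ∈ A, ∀ g ∈ A, f ≠ g → ReducedWrt lt σset g f

/-- `rk f < rk g`: the leader of `f` is below that of `g`, or they coincide and the
leading degree of `f` is smaller. -/
def RkLt {R : Type} [CommRing R] {n M : ℕ} (lt : DVar n M → DVar n M → Prop)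
    (f g : MvPolynomial (DVar n M) R) : Prop :=
  ∃ uf ug, IsLeader lt f uf ∧ IsLeader lt g ug ∧
    (lt uf ug ∨ (uf = ug ∧ degreeOf uf f < degreeOf ug g))

/-- `rk f = rk g`: same leader and same leading degree. -/
def RkEq {R : Type} [CommRing R] {n M : ℕ} (lt : DVar n M → DVar n M → Prop)
    (f g : MvPolynomial (DVar n M) R) : Prop :=
  ∃ uf ug, IsLeader lt f uf ∧ IsLeader lt g ug ∧ uf = ug ∧
    degreeOf uf f = degreeOf ug g

/-- `rk f ≤ rk g` (with constants of lowest rank). -/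
def RkLe {R : Type} [CommRing R] {n M : ℕ} (lt : DVar n M → DVar n M → Prop)
    (f g : MvPolynomial (DVar n M) R) : Prop :=
  IsConst f ∨ RkLt lt f g ∨ RkEq lt f g

/-- `lt` is a ranking of the variables, with `σ`-operators `σset` and operator ranks `ν`. -/
structure IsRanking {n M : ℕ} (lt : DVar n M → DVar n M → Prop)
    (σset : Finset (Fin M)) (ν : Fin M → ℕ) : Prop where
  trichot : ∀ u v, lt u v ∨ u = v ∨ lt v u
  irrefl : ∀ u, ¬ lt u u
  trans : ∀ u v w, lt u v → lt v w → lt u w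
  wf : WellFounded lt
  lt_op : ∀ (u : DVar n M) (k : Fin M), lt u (shiftVar u (Pi.single k 1))
  mono : ∀ (u v : DVar n M) (k : Fin M), lt u v →
    lt (shiftVar u (Pi.single k 1)) (shiftVar v (Pi.single k 1))
  op_ord : ∀ (u : DVar n M) (k k' : Fin M), ν k < ν k' →
    lt (shiftVar u (Pi.single k 1)) (shiftVar u (Pi.single k' 1))
  nu_sigma : ∀ k ∈ σset, ν k = 0

/-- Lexicographic comparison of two rank-sorted lists of `D*`-polynomials. -/
def PrecList {R : Type} [CommRing R] {n M : ℕ} (lt : DVar n M → DVar n M → Prop)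
    (la lb : List (MvPolynomial (DVar n M) R)) : Prop :=
  (∃ i : ℕ, i < la.length ∧ i < lb.length ∧
      RkLt lt (la.getD i 0) (lb.getD i 0) ∧
      ∀ j < i, RkEq lt (la.getD j 0) (lb.getD j 0)) ∨
  (lb.length < la.length ∧ ∀ i < lb.length, RkEq lt (la.getD i 0) (lb.getD i 0))

/-- The pre-order `A ≺ B` on autoreduced (finite) sets of `D*`-polynomials. -/
def Prec {R : Type} [CommRing R] {n M : ℕ} (lt : DVar n M → DVar n M → Prop)
    (A B : Finset (MvPolynomial (DVar n M) R)) : Prop :=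
  ∃ la lb : List (MvPolynomial (DVar n M) R),
    la.Nodup ∧ lb.Nodup ∧ (∀ f, f ∈ la ↔ f ∈ A) ∧ (∀ f, f ∈ lb ↔ f ∈ B) ∧
    la.Pairwise (RkLt lt) ∧ lb.Pairwise (RkLt lt) ∧ PrecList lt la lb

/-- The initial of `f` with respect to the variable `u`: the leading coefficient of `f`
viewed as a univariate polynomial in `u`. -/
noncomputable def initialOf {R : Type} [CommRing R] {n M : ℕ} (u : DVar n M)
    (f : MvPolynomial (DVar n M) R) : MvPolynomial (DVar n M) R :=
  ∑ d ∈ f.support.filter (fun d => d u = degreeOf u f),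
    monomial (d.erase u) (coeff d f)

/-- `𝒞` is a characteristic set of the ideal `I`: a minimal element (for `≺`) of the
collection of autoreduced subsets `A ⊆ I` with `s_f ∉ I` for all `f ∈ A`. -/
def IsCharSet {R : Type} [CommRing R] {n M : ℕ} (lt : DVar n M → DVar n M → Prop)
    (σset : Finset (Fin M)) (I : Ideal (MvPolynomial (DVar n M) R))
    (𝒞 : Finset (MvPolynomial (DVar n M) R)) : Prop :=
  (Autoreduced lt σset (𝒞 : Set (MvPolynomial (DVar n M) R)) ∧
    (𝒞 : Set (MvPolynomial (DVar n M) R)) ⊆ (I : Set (MvPolynomial (DVar n M) R)) ∧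
    ∀ f ∈ 𝒞, ∀ u : DVar n M, IsLeader lt f u → pderiv u f ∉ I) ∧
  ∀ B : Finset (MvPolynomial (DVar n M) R),
    Autoreduced lt σset (B : Set (MvPolynomial (DVar n M) R)) →
    (B : Set (MvPolynomial (DVar n M) R)) ⊆ (I : Set (MvPolynomial (DVar n M) R)) →
    (∀ f ∈ B, ∀ u : DVar n M, IsLeader lt f u → pderiv u f ∉ I) →
    ¬ Prec lt B 𝒞

section AuxGen
variable {α : Type*}

/-- A max element of a finite set under a "linear" relation. -/
lemma exists_rel_max (r : α → α → Prop) (htrans : ∀ a b c, r a b → r b c → r a c)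
    (s : Finset α) (hs : s.Nonempty)
    (hcomp : ∀ a ∈ s, ∀ b ∈ s, a ≠ b → r a b ∨ r b a) :
    ∃ u ∈ s, ∀ v ∈ s, v ≠ u → r v u := by
  classical
  induction s using Finset.induction_on with
  | empty => exact absurd hs (by simp)
  | @insert x s hx ih =>
    rcases s.eq_empty_or_nonempty with rfl | hs'
    · exact ⟨x, by simp, by simp⟩
    · obtain ⟨m, hm, hmax⟩ := ih hs'
        (fun a ha b hb hab => hcomp a (Finset.mem_insert_of_mem ha) b (Finset.mem_insert_of_mem hb) hab)
      have hxm : x ≠ m := fun h => hx (h ▸ hm)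
      rcases hcomp x (Finset.mem_insert_self x s) m (Finset.mem_insert_of_mem hm) hxm with h.xm | h.mx
      · refine ⟨m, Finset.mem_insert_of_mem hm, ?_⟩
        intro v hv hvm
        rcases Finset.mem_insert.mp hv with rfl | hv'
        · exact h.xm
        · exact hmax v hv' hvm
      · refine ⟨x, Finset.mem_insert_self x s, ?_⟩
        intro v hv hvx
        rcases Finset.mem_insert.mp hv with rfl | hv'
        · exact absurd rfl hvx
        · by_cases hvm : v = m
          · exact hvm ▸ h.mx
          · exact htrans _ _ _ (hmax v hv' hvm) h.mx

/-- A sorted duplicate-free list enumerating a finite set. -/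
lemma exists_sorted_list (r : α → α → Prop) (htrans : ∀ a b c, r a b → r b c → r a c)
    (s : Finset α)
    (hcomp : ∀ a ∈ s, ∀ b ∈ s, a ≠ b → r a b ∨ r b a) :
    ∃ l : List α, l.Nodup ∧ (∀ x, x ∈ l ↔ x ∈ s) ∧ l.Pairwise r := by
  classical
  induction s using Finset.strongInduction with
  | _ s ih =>
    rcases s.eq_empty_or_nonempty with rfl | hs
    · exact ⟨[], by simp, by simp, by simp⟩
    · -- pick a minimum: max for flipped relation
      obtain ⟨a, ha, hamin⟩ := exists_rel_max (fun x y => r y x)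
        (fun a b c hab hbc => htrans _ _ _ hbc hab) s hs
        (fun x hx y hy hxy => (hcomp x hx y hy hxy).symm)
      obtain ⟨l, hnd, hmem, hpw⟩ := ih (s.erase a) (Finset.erase_ssubset ha)
        (fun x hx y hy hxy =>
          hcomp x (Finset.mem_of_mem_erase hx) y (Finset.mem_of_mem_erase hy) hxy)
      refine ⟨a :: l, ?_, ?_, ?_⟩
      · refine List.nodup_cons.mpr ⟨fun h => ?_, hnd⟩
        exact (Finset.notMem_erase a s) ((hmem a).mp h)
      · intro x
        simp only [List.mem_cons, hmem, Finset.mem_erase]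
        constructor
        · rintro (rfl | ⟨_, h⟩) <;> [exact ha; exact h]
        · intro hx
          by_cases hxa : x = a
          · exact Or.inl hxa
          · exact Or.inr ⟨hxa, hx⟩
      · refine List.pairwise_cons.mpr ⟨?_, hpw⟩
        intro b hb
        have hb' := (hmem b).mp hb
        exact hamin b (Finset.mem_of_mem_erase hb') (Finset.ne_of_mem_erase hb')

end AuxGen
section AuxRank

variable {R : Type} [CommRing R] {n M : ℕ}
variable {lt : DVar n M → DVar n M → Prop} {σset : Finset (Fin M)} {ν : Fin M → ℕ}

lemma shiftVar_zero (u : DVar n M) : shiftVar u 0 = u := by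
  simp [shiftVar]

lemma shiftVar_add (u : DVar n M) (φ ψ : Fin M → ℕ) :
    shiftVar u (φ + ψ) = shiftVar (shiftVar u φ) ψ := by
  simp [shiftVar, add_assoc]

lemma IsRanking.asymm (hr : IsRanking lt σset ν) {u v : DVar n M} (h : lt u v) : ¬ lt v u :=
  fun h' => hr.irrefl u (hr.trans _ _ _ h h')

lemma IsRanking.lt_shiftVar (hr : IsRanking lt σset ν) {φ : Fin M → ℕ} (hφ : φ ≠ 0)
    (u : DVar n M) : lt u (shiftVar u φ) := by
  have key : ∀ N : ℕ, ∀ φ : Fin M → ℕ, (∑ l, φ l) = N → φ ≠ 0 → ∀ u, lt u (shiftVar u φ) := by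
    intro N
    induction N using Nat.strong_induction_on with
    | _ N ih =>
      intro φ hsum hφ u
      obtain ⟨k, hk⟩ := Function.ne_iff.mp hφ
      simp only [Pi.zero_apply] at hk
      set ψ : Fin M → ℕ := Function.update φ k (φ k - 1) with hψ
      have hdecomp : φ = ψ + Pi.single k 1 := by
        funext l
        by_cases hl : l = k
        · subst hl
          simp [hψ, Function.update_self, Pi.single_eq_same, Nat.sub_add_cancel (Nat.one_le_iff_ne_zero.mpr hk)]
        · simp [hψ, Function.update_of_ne hl, Pi.single_eq_of_ne hl]
      have hsplit : shiftVar u φ = shiftVar (shiftVar u ψ) (Pi.single k 1) := by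
        rw [hdecomp, shiftVar_add]
      by_cases hψ0 : ψ = 0
      · rw [hsplit, hψ0, shiftVar_zero]
        exact hr.lt_op u k
      · have hsumψ : (∑ l, ψ l) + 1 = N := by
          rw [← hsum, hdecomp]
          simp [Finset.sum_add_distrib]
        have hlt : (∑ l, ψ l) < N := by omega
        have h1 : lt u (shiftVar u ψ) := ih _ hlt ψ rfl hψ0 u
        have h2 : lt (shiftVar u ψ) (shiftVar (shiftVar u ψ) (Pi.single k 1)) :=
          hr.lt_op _ k
        rw [hsplit]
        exact hr.trans _ _ _ h1 h2
  exact key _ φ rfl hφ u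

lemma IsLeader.unique (hr : IsRanking lt σset ν) {f : MvPolynomial (DVar n M) R}
    {u v : DVar n M} (hu : IsLeader lt f u) (hv : IsLeader lt f v) : u = v := by
  by_contra h
  exact hr.irrefl u (hr.trans _ _ _ (hv.2 u hu.1 h) (hu.2 v hv.1 (Ne.symm h)))

lemma exists_leader (hr : IsRanking lt σset ν) {f : MvPolynomial (DVar n M) R}
    (hf : f.vars.Nonempty) : ∃ u, IsLeader lt f u := by
  obtain ⟨u, hu, hmax⟩ := exists_rel_max lt (fun a b c => hr.trans a b c) f.vars hf
    (fun a _ b _ hab => by rcases hr.trichot a b with h | h | h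
                           · exact Or.inl h
                           · exact absurd h hab
                           · exact Or.inr h)
  exact ⟨u, hu, hmax⟩

lemma eq_C_of_vars_empty {f : MvPolynomial (DVar n M) R} (hf : f.vars = ∅) :
    f = C (coeff 0 f) := by
  ext m
  by_cases hm : m = 0
  · simp [hm]
  · rw [coeff_C, if_neg (Ne.symm hm)]
    by_contra hc
    obtain ⟨i, hi⟩ := Finsupp.ne_iff.mp hm
    simp only [Finsupp.coe_zero, Pi.zero_apply] at hi
    have : i ∈ f.vars := (mem_vars i).mpr ⟨m, mem_support_iff.mpr hc, Finsupp.mem_support_iff.mpr hi⟩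
    simp [hf] at this

lemma vars_nonempty_of_not_const {f : MvPolynomial (DVar n M) R} (hf : ¬ IsConst f) :
    f.vars.Nonempty := by
  rcases f.vars.eq_empty_or_nonempty with h | h
  · exact absurd ⟨_, eq_C_of_vars_empty h⟩ hf
  · exact h

lemma degreeOf_pos_of_mem_vars {f : MvPolynomial (DVar n M) R} {u : DVar n M}
    (hu : u ∈ f.vars) : 0 < degreeOf u f := by
  obtain ⟨d, hd, hud⟩ := (mem_vars u).mp hu
  have := Finset.le_sup (f := fun m => m u) hd
  rw [← degreeOf_eq_sup] at this
  exact lt_of_lt_of_le (Nat.pos_of_ne_zero (Finsupp.mem_support_iff.mp hud)) this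

lemma degreeOf_eq_zero_of_not_mem_vars {f : MvPolynomial (DVar n M) R} {u : DVar n M}
    (hu : u ∉ f.vars) : degreeOf u f = 0 := by
  rw [degreeOf_eq_sup]
  refine (Finset.sup_eq_bot_iff _ _).mpr fun m hm => ?_
  by_contra h
  exact hu ((mem_vars u).mpr ⟨m, hm, Finsupp.mem_support_iff.mpr h⟩)

lemma not_mem_vars_of_leader_lt (hr : IsRanking lt σset ν) {g : MvPolynomial (DVar n M) R}
    {w v : DVar n M} (hw : IsLeader lt g w) (hv : lt w v) : v ∉ g.vars := by
  intro hmem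
  by_cases hvw : v = w
  · exact hr.irrefl w (hvw ▸ hv)
  · exact hr.asymm hv (hw.2 v hmem hvw)

/-- A polynomial whose leader is strictly below the leader of `f` is reduced w.r.t. `f`. -/
lemma reducedWrt_of_leader_lt (hr : IsRanking lt σset ν)
    {f g : MvPolynomial (DVar n M) R} {u w : DVar n M}
    (hu : IsLeader lt f u) (hw : IsLeader lt g w) (hwu : lt w u) :
    ReducedWrt lt σset g f := by
  intro u' hu'
  have : u' = u := IsLeader.unique hr hu' hu
  subst this
  have hshift : ∀ φ : Fin M → ℕ, shiftVar u' φ ∉ g.vars := by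
    intro φ
    by_cases hφ : φ = 0
    · rw [hφ, shiftVar_zero]
      exact not_mem_vars_of_leader_lt hr hw hwu
    · exact not_mem_vars_of_leader_lt hr hw (hr.trans _ _ _ hwu (hr.lt_shiftVar hφ u'))
  refine ⟨fun φ _ => hshift φ, fun φ _ => ?_⟩
  rw [degreeOf_eq_zero_of_not_mem_vars (hshift φ)]
  exact degreeOf_pos_of_mem_vars hu'.1

lemma not_reducedWrt_self (hr : IsRanking lt σset ν) {f : MvPolynomial (DVar n M) R}
    {u : DVar n M} (hu : IsLeader lt f u) : ¬ ReducedWrt lt σset f f := by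
  intro h
  have h2 := (h u hu).2 0 (fun k hk => absurd rfl hk)
  rw [shiftVar_zero] at h2
  exact lt_irrefl _ h2

end AuxRank
section AuxPoly

variable {R : Type} [CommRing R] {n M : ℕ}
variable {lt : DVar n M → DVar n M → Prop} {σset : Finset (Fin M)} {ν : Fin M → ℕ}

lemma coeff_pderiv' (u : DVar n M) (f : MvPolynomial (DVar n M) R) (m : DVar n M →₀ ℕ) :
    coeff m (pderiv u f) = ((m u : R) + 1) * coeff (m + Finsupp.single u 1) f := by
  induction f using MvPolynomial.induction_on' with
  | add p q hp hq => simp [coeff_add, hp, hq, mul_add]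
  | monomial s a =>
    rw [pderiv_monomial]
    by_cases h : s = m + Finsupp.single u 1
    · subst h
      rw [coeff_monomial, coeff_monomial, if_pos rfl, if_pos (by rw [add_tsub_cancel_right])]
      simp only [Finsupp.coe_add, Pi.add_apply, Finsupp.single_eq_same]
      push_cast
      ring
    · rw [coeff_monomial, coeff_monomial, if_neg h, mul_zero]
      split_ifs with h'
      · have hs : s u = 0 := by
          by_contra hs
          apply h
          rw [← h', tsub_add_cancel_of_le]
          exact Finsupp.single_le_iff.mpr (Nat.one_le_iff_ne_zero.mpr hs)
        rw [hs]
        simp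
      · rfl

/-- If every monomial of `g` is dominated by a monomial of `f`, then the variables of
`g` are among those of `f` and all degrees are bounded. -/
lemma vars_degree_le_of_support {f g : MvPolynomial (DVar n M) R}
    (h : ∀ m ∈ g.support, ∃ m' ∈ f.support, ∀ v, m v ≤ m' v) :
    g.vars ⊆ f.vars ∧ ∀ v, degreeOf v g ≤ degreeOf v f := by
  constructor
  · intro v hv
    obtain ⟨m, hm, hvm⟩ := (mem_vars v).mp hv
    obtain ⟨m', hm', hle⟩ := h m hm
    refine (mem_vars v).mpr ⟨m', hm', Finsupp.mem_support_iff.mpr ?_⟩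
    have := hle v
    have hmv := Finsupp.mem_support_iff.mp hvm
    omega
  · intro v
    rw [degreeOf_eq_sup, degreeOf_eq_sup]
    refine Finset.sup_le fun m hm => ?_
    obtain ⟨m', hm', hle⟩ := h m hm
    exact le_trans (hle v) (Finset.le_sup (f := fun m => m v) hm')

/-- Reducedness transfers along domination of variables and degrees. -/
lemma reducedWrt_of_le {f g h : MvPolynomial (DVar n M) R}
    (hvars : g.vars ⊆ f.vars) (hdeg : ∀ v, degreeOf v g ≤ degreeOf v f)
    (hf : ReducedWrt lt σset f h) : ReducedWrt lt σset g h := by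
  intro u hu
  obtain ⟨h1, h2⟩ := hf u hu
  exact ⟨fun φ hφ hmem => h1 φ hφ (hvars hmem),
    fun φ hφ => lt_of_le_of_lt (hdeg _) (h2 φ hφ)⟩

lemma rkLt_trans (hr : IsRanking lt σset ν) {f g h : MvPolynomial (DVar n M) R}
    (h1 : RkLt lt f g) (h2 : RkLt lt g h) : RkLt lt f h := by
  obtain ⟨uf, ug, huf, hug, hc1⟩ := h1
  obtain ⟨ug', uh, hug', huh, hc2⟩ := h2
  have : ug' = ug := IsLeader.unique hr hug' hug
  subst this
  refine ⟨uf, uh, huf, huh, ?_⟩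
  rcases hc1 with h | ⟨rfl, hd⟩ <;> rcases hc2 with h' | ⟨rfl, hd'⟩
  · exact Or.inl (hr.trans _ _ _ h h')
  · exact Or.inl h
  · exact Or.inl h'
  · exact Or.inr ⟨rfl, lt_trans hd hd'⟩

lemma rkEq_refl (hr : IsRanking lt σset ν) {f : MvPolynomial (DVar n M) R} {u : DVar n M}
    (hu : IsLeader lt f u) : RkEq lt f f := ⟨u, u, hu, hu, rfl, rfl⟩

/-- In an autoreduced family, two distinct members are `RkLt`-comparable. -/
lemma rkLt_comparable (hr : IsRanking lt σset ν)
    {A : Set (MvPolynomial (DVar n M) R)} (hA : Autoreduced lt σset A)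
    {f g : MvPolynomial (DVar n M) R} (hf : f ∈ A) (hg : g ∈ A) (hfg : f ≠ g) :
    RkLt lt f g ∨ RkLt lt g f := by
  obtain ⟨uf, huf⟩ := exists_leader hr (vars_nonempty_of_not_const (hA.1 f hf))
  obtain ⟨ug, hug⟩ := exists_leader hr (vars_nonempty_of_not_const (hA.1 g hg))
  rcases hr.trichot uf ug with h | h | h
  · exact Or.inl ⟨uf, ug, huf, hug, Or.inl h⟩
  · subst h
    -- g is reduced w.r.t. f : degree of g in the common leader is < that of f
    have hred := (hA.2 f hf g hg hfg uf huf).2 0 (fun k hk => absurd rfl hk)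
    rw [shiftVar_zero] at hred
    exact Or.inr ⟨uf, uf, hug, huf, Or.inr ⟨rfl, hred⟩⟩
  · exact Or.inr ⟨ug, uf, hug, huf, Or.inl h⟩

lemma span_inter_eq_map (I : Ideal (MvPolynomial (DVar n M) R)) : Ideal.span ((I : Set (MvPolynomial (DVar n M) R)) ∩
      Set.range (C : R →+* MvPolynomial (DVar n M) R)) =
    Ideal.map (C : R →+* MvPolynomial (DVar n M) R)
      (I.comap (C : R →+* MvPolynomial (DVar n M) R)) := by
  rw [Ideal.map, Ideal.span]
  congr 1
  ext x
  constructor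
  · rintro ⟨hxI, r, rfl⟩
    exact ⟨r, hxI, rfl⟩
  · rintro ⟨r, hr, rfl⟩
    exact ⟨hr, r, rfl⟩

end AuxPoly
section AuxContra

variable {R : Type} [CommRing R] {n M : ℕ}
variable {lt : DVar n M → DVar n M → Prop} {σset : Finset (Fin M)} {ν : Fin M → ℕ}

lemma getD_mem_of_lt {l : List (MvPolynomial (DVar n M) R)} {j : ℕ} (hj : j < l.length) :
    l.getD j 0 ∈ l := by
  rw [List.getD_eq_getElem _ _ hj]
  exact List.getElem_mem hj

/-- If `f ∈ I` is reduced w.r.t. `𝒞`, has leader `u` and its separant avoids `I`,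
we can build an autoreduced set strictly below `𝒞`, contradicting minimality. -/
lemma charset_contradiction (hr : IsRanking lt σset ν)
    (I : Ideal (MvPolynomial (DVar n M) R)) (𝒞 : Finset (MvPolynomial (DVar n M) R))
    (h𝒞 : IsCharSet lt σset I 𝒞) (f : MvPolynomial (DVar n M) R) (hfI : f ∈ I)
    (hred : ReducedWrtSet lt σset f (𝒞 : Set (MvPolynomial (DVar n M) R)))
    (u : DVar n M) (hu : IsLeader lt f u) (hP : pderiv u f ∉ I) : False := by
  classical
  obtain ⟨⟨hauto, hsub, hsep⟩, hmin⟩ := h𝒞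
  have hf𝒞 : f ∉ 𝒞 := fun h => not_reducedWrt_self hr hu (hred f h)
  have hlead : ∀ g ∈ 𝒞, ∃ w, IsLeader lt g w := fun g hg =>
    exists_leader hr (vars_nonempty_of_not_const (hauto.1 g hg))
  set Low : Finset (MvPolynomial (DVar n M) R) :=
    𝒞.filter (fun g => ∃ v, IsLeader lt g v ∧ lt v u) with hLowDef
  set High : Finset (MvPolynomial (DVar n M) R) :=
    𝒞.filter (fun g => ¬ ∃ v, IsLeader lt g v ∧ lt v u) with hHighDef
  have hLow𝒞 : ∀ g ∈ Low, g ∈ 𝒞 := fun g hg => (Finset.mem_filter.mp hg).1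
  have hHigh𝒞 : ∀ g ∈ High, g ∈ 𝒞 := fun g hg => (Finset.mem_filter.mp hg).1
  have hLowLt : ∀ g ∈ Low, RkLt lt g f := by
    intro g hg
    obtain ⟨v, hv, hvu⟩ := (Finset.mem_filter.mp hg).2
    exact ⟨v, u, hv, hu, Or.inl hvu⟩
  have hHighGt : ∀ h' ∈ High, RkLt lt f h' := by
    intro h' hh'
    obtain ⟨w, hw⟩ := hlead h' (hHigh𝒞 h' hh')
    have hnw : ¬ lt w u := fun hc => (Finset.mem_filter.mp hh').2 ⟨w, hw, hc⟩
    rcases hr.trichot w u with h | h | h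
    · exact absurd h hnw
    · subst h
      have hd := (hred h' (hHigh𝒞 h' hh') w hw).2 0 (fun k hk => absurd rfl hk)
      rw [shiftVar_zero] at hd
      exact ⟨w, w, hu, hw, Or.inr ⟨rfl, hd⟩⟩
    · exact ⟨u, w, hu, hw, Or.inl h⟩
  have hLowHigh : ∀ g ∈ Low, ∀ h' ∈ High, RkLt lt g h' := fun g hg h' hh' =>
    rkLt_trans hr (hLowLt g hg) (hHighGt h' hh')
  -- sorted lists
  have hcompsub : ∀ (s : Finset (MvPolynomial (DVar n M) R)), (∀ x ∈ s, x ∈ 𝒞) →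
      ∀ a ∈ s, ∀ b ∈ s, a ≠ b → RkLt lt a b ∨ RkLt lt b a := fun s hs a ha b hb hab =>
    rkLt_comparable hr hauto (hs a ha) (hs b hb) hab
  obtain ⟨lL, hndL, hmemL, hpwL⟩ := exists_sorted_list (RkLt lt)
    (fun a b c hab hbc => rkLt_trans hr hab hbc) Low (hcompsub Low hLow𝒞)
  obtain ⟨lH, hndH, hmemH, hpwH⟩ := exists_sorted_list (RkLt lt)
    (fun a b c hab hbc => rkLt_trans hr hab hbc) High (hcompsub High hHigh𝒞)
  set B : Finset (MvPolynomial (DVar n M) R) := insert f Low with hBDef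
  have hmemB : ∀ g, g ∈ B ↔ g = f ∨ g ∈ Low := by
    intro g; simp [hBDef]
  -- B is autoreduced
  have hBauto : Autoreduced lt σset (B : Set (MvPolynomial (DVar n M) R)) := by
    constructor
    · intro g hg
      rcases (hmemB g).mp hg with rfl | hg'
      · rintro ⟨r, hr'⟩
        have := hu.1
        rw [hr', vars_C] at this
        simp at this
      · exact hauto.1 g (hLow𝒞 g hg')
    · intro a ha b hb hab
      rcases (hmemB a).mp ha with rfl | ha' <;> rcases (hmemB b).mp hb with rfl | hb'
      · exact absurd rfl hab
      · -- need : b reduced wrt a = f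
        obtain ⟨w, hw, hwu⟩ := (Finset.mem_filter.mp hb').2
        exact reducedWrt_of_leader_lt hr hu hw hwu
      · exact hred a (hLow𝒞 a ha')
      · exact hauto.2 a (hLow𝒞 a ha') b (hLow𝒞 b hb') hab
  -- B ⊆ I
  have hBsub : (B : Set (MvPolynomial (DVar n M) R)) ⊆ (I : Set (MvPolynomial (DVar n M) R)) := by
    intro g hg
    rcases (hmemB g).mp hg with rfl | hg'
    · exact hfI
    · exact hsub (hLow𝒞 g hg')
  -- separants
  have hBsep : ∀ g ∈ B, ∀ v : DVar n M, IsLeader lt g v → pderiv v g ∉ I := by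
    intro g hg v hv
    rcases (hmemB g).mp hg with rfl | hg'
    · rwa [IsLeader.unique hr hv hu]
    · exact hsep g (hLow𝒞 g hg') v hv
  -- Prec B 𝒞
  refine hmin B hBauto hBsub hBsep ?_
  refine ⟨lL ++ [f], lL ++ lH, ?_, ?_, ?_, ?_, ?_, ?_, ?_⟩
  · rw [List.nodup_append]
    refine ⟨hndL, List.nodup_singleton f, ?_⟩
    intro a ha b hfa hab
    rw [List.mem_singleton] at hfa
    subst hfa
    subst hab
    exact hf𝒞 (hLow𝒞 _ ((hmemL _).mp ha))
  · rw [List.nodup_append]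
    refine ⟨hndL, hndH, ?_⟩
    intro a ha b haH hab
    subst hab
    have h1 := (Finset.mem_filter.mp ((hmemL a).mp ha)).2
    have h2 := (Finset.mem_filter.mp ((hmemH a).mp haH)).2
    exact h2 h1
  · intro g
    rw [List.mem_append, List.mem_singleton, hmemL, hmemB]
    tauto
  · intro g
    rw [List.mem_append, hmemL, hmemH, hLowDef, hHighDef]
    simp only [Finset.mem_filter]
    constructor
    · rintro (⟨h, _⟩ | ⟨h, _⟩) <;> exact h
    · intro hg
      by_cases hc : ∃ v, IsLeader lt g v ∧ lt v u
      · exact Or.inl ⟨hg, hc⟩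
      · exact Or.inr ⟨hg, hc⟩
  · rw [List.pairwise_append]
    refine ⟨hpwL, List.pairwise_singleton _ _, ?_⟩
    intro a ha b hb
    rw [List.mem_singleton] at hb
    subst hb
    exact hLowLt a ((hmemL a).mp ha)
  · rw [List.pairwise_append]
    exact ⟨hpwL, hpwH, fun a ha b hb => hLowHigh a ((hmemL a).mp ha) b ((hmemH b).mp hb)⟩
  · -- PrecList
    have hRkEqPrefix : ∀ j < lL.length,
        RkEq lt ((lL ++ [f]).getD j 0) ((lL ++ lH).getD j 0) := by
      intro j hj
      rw [List.getD_append _ _ _ _ hj, List.getD_append _ _ _ _ hj]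
      have hmem' : lL.getD j 0 ∈ Low := (hmemL _).mp (getD_mem_of_lt hj)
      obtain ⟨w, hw⟩ := hlead _ (hLow𝒞 _ hmem')
      exact rkEq_refl hr hw
    rcases List.eq_nil_or_concat lH with hH | _
    · -- no high part : second alternative
      right
      subst hH
      constructor
      · simp
      · intro i hi
        simp only [List.append_nil] at hi ⊢
        have := hRkEqPrefix i (by simpa using hi)
        simpa using this
    · -- high part nonempty : first alternative
      have hHne : lH ≠ [] := by
        rename_i hcon
        obtain ⟨l', a, rfl⟩ := hcon
        simp
      left
      refine ⟨lL.length, by simp, ?_, ?_, hRkEqPrefix⟩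
      · have : 0 < lH.length := List.length_pos_iff.mpr hHne
        simp only [List.length_append]
        omega
      · rw [List.getD_append_right _ _ _ _ (le_refl _), Nat.sub_self,
          List.getD_append_right _ _ _ _ (le_refl _), Nat.sub_self]
        have h0 : lH.getD 0 0 ∈ High := (hmemH _).mp (getD_mem_of_lt (List.length_pos_iff.mpr hHne))
        have : ([f] : List (MvPolynomial (DVar n M) R)).getD 0 0 = f := rfl
        rw [this]
        exact hHighGt _ h0

end AuxContra
section KeyLemma

variable {R : Type} [CommRing R] [Algebra ℚ R] {n M : ℕ}
variable {lt : DVar n M → DVar n M → Prop} {σset : Finset (Fin M)} {ν : Fin M → ℕ}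

lemma const_mem_map {I : Ideal (MvPolynomial (DVar n M) R)}
    {f : MvPolynomial (DVar n M) R} (hvars : f.vars = ∅) (hfI : f ∈ I) :
    f ∈ Ideal.map (C : R →+* MvPolynomial (DVar n M) R)
      (I.comap (C : R →+* MvPolynomial (DVar n M) R)) := by
  have hf : f = C (coeff 0 f) := eq_C_of_vars_empty hvars
  rw [hf]
  refine MvPolynomial.mem_map_C_iff.mpr fun m => ?_
  rw [coeff_C]
  split_ifs
  · exact Ideal.mem_comap.mpr (hf ▸ hfI)
  · exact zero_mem _

lemma key_mem_map (hr : IsRanking lt σset ν)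
    (I : Ideal (MvPolynomial (DVar n M) R)) (𝒞 : Finset (MvPolynomial (DVar n M) R))
    (h𝒞 : IsCharSet lt σset I 𝒞) (u : DVar n M) :
    ∀ d : ℕ, ∀ f : MvPolynomial (DVar n M) R,
      f ∈ I → ReducedWrtSet lt σset f (𝒞 : Set (MvPolynomial (DVar n M) R)) →
      (∀ v ∈ f.vars, lt v u ∨ v = u) → degreeOf u f ≤ d →
      f ∈ Ideal.map (C : R →+* MvPolynomial (DVar n M) R)
        (I.comap (C : R →+* MvPolynomial (DVar n M) R)) := by
  classical
  have hacc : Acc lt u := hr.wf.apply u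
  induction hacc with
  | intro u _ ihu =>
    have base : ∀ f : MvPolynomial (DVar n M) R,
        f ∈ I → ReducedWrtSet lt σset f (𝒞 : Set (MvPolynomial (DVar n M) R)) →
        (∀ v ∈ f.vars, lt v u ∨ v = u) → u ∉ f.vars →
        f ∈ Ideal.map (C : R →+* MvPolynomial (DVar n M) R)
          (I.comap (C : R →+* MvPolynomial (DVar n M) R)) := by
      intro f hfI hfred hvars hnu
      rcases f.vars.eq_empty_or_nonempty with hv | hv
      · exact const_mem_map hv hfI
      · obtain ⟨w, hw⟩ := exists_leader hr hv
        have hwu : lt w u := by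
          rcases hvars w hw.1 with h | h
          · exact h
          · exact absurd (h ▸ hw.1) hnu
        have hvw' : ∀ v ∈ f.vars, lt v w ∨ v = w := by
          intro v hv'
          by_cases h : v = w
          · exact Or.inr h
          · exact Or.inl (hw.2 v hv' h)
        exact ihu w hwu (degreeOf w f) f hfI hfred hvw' le_rfl
    intro d
    induction d with
    | zero =>
      intro f hfI hfred hvars hdeg
      refine base f hfI hfred hvars fun hc => ?_
      have := degreeOf_pos_of_mem_vars hc
      omega
    | succ d ihd =>
      intro f hfI hfred hvars hdeg
      by_cases hnu : u ∈ f.vars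
      · have hlead : IsLeader lt f u := ⟨hnu, fun v hv hvu => (hvars v hv).resolve_right hvu⟩
        by_cases hP : pderiv u f ∈ I
        · set g := pderiv u f with hg
          have hsupp : ∀ m ∈ g.support, m + Finsupp.single u 1 ∈ f.support := by
            intro m hm
            rw [mem_support_iff] at hm ⊢
            intro hc
            exact hm (by rw [hg, coeff_pderiv', hc, mul_zero])
          have hdom : ∀ m ∈ g.support, ∃ m' ∈ f.support, ∀ v, m v ≤ m' v :=
            fun m hm => ⟨m + Finsupp.single u 1, hsupp m hm,
              fun v => by simp [Finsupp.add_apply]⟩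
          obtain ⟨hgvars, hgdeg⟩ := vars_degree_le_of_support hdom
          have hgred : ReducedWrtSet lt σset g (𝒞 : Set (MvPolynomial (DVar n M) R)) :=
            fun c hc => reducedWrt_of_le hgvars hgdeg (hfred c hc)
          have hgvars' : ∀ v ∈ g.vars, lt v u ∨ v = u := fun v hv => hvars v (hgvars hv)
          have hgdegu : degreeOf u g ≤ d := by
            rw [degreeOf_eq_sup]
            refine Finset.sup_le fun m hm => ?_
            have h1 : ((m + Finsupp.single u 1 : DVar n M →₀ ℕ)) u ≤ degreeOf u f := by
              rw [degreeOf_eq_sup]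
              exact Finset.le_sup (f := fun m => m u) (hsupp m hm)
            simp only [Finsupp.coe_add, Pi.add_apply, Finsupp.single_eq_same] at h1
            omega
          have hgJ := ihd g hP hgred hgvars' hgdegu
          have hcoeffg := MvPolynomial.mem_map_C_iff.mp hgJ
          -- every coefficient of f at a monomial involving u lies in I ∩ R
          have hposf : ∀ m : DVar n M →₀ ℕ, m u ≠ 0 →
              coeff m f ∈ I.comap (C : R →+* MvPolynomial (DVar n M) R) := by
            intro m hm
            have hle : Finsupp.single u 1 ≤ m :=
              Finsupp.single_le_iff.mpr (Nat.one_le_iff_ne_zero.mpr hm)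
            have hrec := hcoeffg (m - Finsupp.single u 1)
            rw [coeff_pderiv', tsub_add_cancel_of_le hle] at hrec
            have hval : ((((m - Finsupp.single u 1 : DVar n M →₀ ℕ)) u : R) + 1) = (m u : R) := by
              rw [Finsupp.tsub_apply, Finsupp.single_eq_same,
                Nat.cast_sub (Nat.one_le_iff_ne_zero.mpr hm)]
              push_cast
              ring
            rw [hval] at hrec
            have hmul : coeff m f =
                algebraMap ℚ R ((m u : ℚ)⁻¹) * ((m u : R) * coeff m f) := by
              rw [← mul_assoc, ← map_natCast (algebraMap ℚ R) (m u), ← map_mul,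
                inv_mul_cancel₀ (Nat.cast_ne_zero.mpr hm), map_one, one_mul]
            rw [hmul]
            exact Ideal.mul_mem_left _ _ hrec
          -- split f into the part involving u and the rest
          set fp : MvPolynomial (DVar n M) R :=
            ∑ m ∈ f.support.filter (fun m => m u ≠ 0), monomial m (coeff m f) with hfp
          have hfpJ : fp ∈ Ideal.map (C : R →+* MvPolynomial (DVar n M) R)
              (I.comap (C : R →+* MvPolynomial (DVar n M) R)) := by
            refine Ideal.sum_mem _ fun m hm => ?_
            rw [← mul_one (coeff m f), ← C_mul_monomial]
            exact Ideal.mul_mem_right _ _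
              (Ideal.mem_map_of_mem _ (hposf m (Finset.mem_filter.mp hm).2))
          have hcoefffp : ∀ m, coeff m fp =
              if m ∈ f.support.filter (fun m => m u ≠ 0) then coeff m f else 0 := by
            intro m
            rw [hfp, coeff_sum]
            rw [Finset.sum_congr rfl (fun m' _ => coeff_monomial m m' (coeff m' f))]
            exact Finset.sum_ite_eq' _ _ _
          set f0 : MvPolynomial (DVar n M) R := f - fp with hf0
          have hf0I : f0 ∈ I := I.sub_mem hfI (Ideal.map_comap_le hfpJ)
          have hf0supp : ∀ m ∈ f0.support, m ∈ f.support ∧ m u = 0 := by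
            intro m hm
            rw [mem_support_iff, hf0, coeff_sub, hcoefffp] at hm
            split_ifs at hm with hmem
            · simp at hm
            · rw [sub_zero] at hm
              rw [Finset.mem_filter] at hmem
              have hms : m ∈ f.support := mem_support_iff.mpr hm
              refine ⟨hms, ?_⟩
              by_contra hmu
              exact hmem ⟨hms, hmu⟩
          have hdom0 : ∀ m ∈ f0.support, ∃ m' ∈ f.support, ∀ v, m v ≤ m' v :=
            fun m hm => ⟨m, (hf0supp m hm).1, fun v => le_rfl⟩
          obtain ⟨h0vars, h0deg⟩ := vars_degree_le_of_support hdom0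
          have h0red : ReducedWrtSet lt σset f0 (𝒞 : Set (MvPolynomial (DVar n M) R)) :=
            fun c hc => reducedWrt_of_le h0vars h0deg (hfred c hc)
          have h0vars' : ∀ v ∈ f0.vars, lt v u ∨ v = u := fun v hv => hvars v (h0vars hv)
          have h0nu : u ∉ f0.vars := by
            intro hc
            obtain ⟨m, hm, hmu⟩ := (mem_vars u).mp hc
            exact (Finsupp.mem_support_iff.mp hmu) (hf0supp m hm).2
          have h0J := base f0 hf0I h0red h0vars' h0nu
          have hsum : f = f0 + fp := by rw [hf0, sub_add_cancel]
          rw [hsum]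
          exact Ideal.add_mem _ h0J hfpJ
        · exact (charset_contradiction hr I 𝒞 h𝒞 f hfI hfred u hlead hP).elim
      · exact base f hfI hfred hvars hnu

end KeyLemma

/-- Assume `R` is a `ℚ`-algebra. If `𝒞` is a characteristic set of an
ideal `I` of the `D*`-polynomial ring and `f ∈ I` is reduced with respect to `𝒞`, then
`f` lies in the ideal `(I ∩ R)` generated by the constants of `I`. -/
theorem reduced_mem_constant_ideal_of_charZero {R : Type} [CommRing R] [Algebra ℚ R]
    {n M : ℕ}
    (lt : DVar n M → DVar n M → Prop) (σset : Finset (Fin M)) (ν : Fin M → ℕ)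
    (hrank : IsRanking lt σset ν)
    (I : Ideal (MvPolynomial (DVar n M) R))
    (𝒞 : Finset (MvPolynomial (DVar n M) R))
    (h𝒞 : IsCharSet lt σset I 𝒞)
    (f : MvPolynomial (DVar n M) R) (hfI : f ∈ I)
    (hred : ReducedWrtSet lt σset f (𝒞 : Set (MvPolynomial (DVar n M) R))) :
    f ∈ Ideal.span ((I : Set (MvPolynomial (DVar n M) R)) ∩
      Set.range (C : R →+* MvPolynomial (DVar n M) R)) := by
  classical
  rw [span_inter_eq_map I]
  rcases f.vars.eq_empty_or_nonempty with hv | hv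
  · exact const_mem_map hv hfI
  · obtain ⟨w, hw⟩ := exists_leader hrank hv
    have hvw : ∀ v ∈ f.vars, lt v w ∨ v = w := by
      intro v hv'
      by_cases h : v = w
      · exact Or.inr h
      · exact Or.inl (hw.2 v hv' h)
    exact key_mem_map hrank I 𝒞 h𝒞 w (degreeOf w f) f hfI hred hvw le_rfl
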